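/- Let R be a commutative ring. Every idempotent of the Laurent series ring R((t)) lies in R; equivalently, any decomposition of R((t)) into a product of two rings is induced by a decomposition R = R₁ × R₂, with the factors R₁((t)) and R₂((t)). -/

import Mathlib

open HahnSeries

section Aux
variable {R : Type*} [CommRing R]

/-- coefficient of a finite sum -/
lemma sum_coeff' {ι : Type*} (s : Finset ι) (g : ι → LaurentSeries R) (a : ℤ) :
    (∑ i ∈ s, g i).coeff a = ∑ i ∈ s, (g i).coeff a := by
  classical
  induction s using Finset.induction with
  | empty => simp
  | insert a s h ih => simp [Finset.sum_insert h, HahnSeries.coeff_add, ih]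

lemma lowzero_mul {x y : LaurentSeries R} {A B : ℤ}
    (hx : ∀ i < A, x.coeff i = 0) (hy : ∀ i < B, y.coeff i = 0) :
    ∀ i < A + B, (x * y).coeff i = 0 := by
  intro i hi
  rw [HahnSeries.coeff_mul]
  refine Finset.sum_eq_zero fun p hp => ?_
  rw [Finset.mem_antidiagonal] at hp
  obtain ⟨h1, h2, h3⟩ := hp
  by_cases hA : p.1 < A
  · rw [hx _ hA, zero_mul]
  · by_cases hB : p.2 < B
    · rw [hy _ hB, mul_zero]
    · exfalso
      push_neg at hA hB
      omega
lemma lowzero_pow {x : LaurentSeries R} {A : ℤ}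
    (hx : ∀ i < A, x.coeff i = 0) (m : ℕ) :
    ∀ i < (m : ℤ) * A, (x ^ m).coeff i = 0 := by
  induction m with
  | zero =>
    intro i hi
    simp only [Nat.cast_zero, zero_mul] at hi
    rw [pow_zero, HahnSeries.coeff_one, if_neg (by omega)]
  | succ m ih =>
    intro i hi
    rw [pow_succ]
    exact lowzero_mul ih hx i (by push_cast at hi ⊢; linarith)

end Aux

/-- **Idempotents of a Laurent series ring are constants.**
For a commutative ring `R`, every idempotent of `R((t))` lies in `R`: it is the image of
an idempotent of `R` under the constant embedding `R → R((t))`. -/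
theorem idempotent_laurentSeries_mem_constants
    (R : Type*) [CommRing R] (f : LaurentSeries R) (hf : f * f = f) :
    ∃ r : R, r * r = r ∧ f = HahnSeries.C r := by
  classical
  by_cases hf0 : f = 0
  · exact ⟨0, by ring, by simp [hf0]⟩
  -- lower bound on the support
  set n' : ℤ := min f.order 0 with hn'def
  have hn'0 : n' ≤ 0 := min_le_right _ _
  have hlow : ∀ i < n', f.coeff i = 0 := fun i hi =>
    HahnSeries.coeff_eq_zero_of_lt_order (lt_of_lt_of_le hi (min_le_left _ _))
  -- Step: nilpotency of a negative coefficient from nilpotency of lower ones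
  have sqnil : ∀ c : R, IsNilpotent (c * c) → IsNilpotent c := by
    rintro c ⟨m, hm⟩
    exact ⟨2 * m, by rw [pow_mul, pow_two]; exact hm⟩
  have step : ∀ j : ℤ, j < 0 → (∀ i : ℤ, i < j → IsNilpotent (f.coeff i)) →
      IsNilpotent (f.coeff j) := by
    intro j hj IH
    by_cases hcj : f.coeff j = 0
    · exact hcj ▸ IsNilpotent.zero
    apply sqnil
    have h2j : (f * f).coeff (2 * j) = f.coeff (2 * j) := by rw [hf]
    rw [HahnSeries.coeff_mul] at h2j
    have hmem : ((j, j) : ℤ × ℤ) ∈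
        Finset.antidiagonal f.isPWO_support f.isPWO_support (2 * j) := by
      rw [Finset.mem_antidiagonal]
      exact ⟨hcj, hcj, (two_mul j).symm⟩
    rw [← Finset.add_sum_erase _ _ hmem] at h2j
    have hrest : IsNilpotent (∑ p ∈ (Finset.antidiagonal f.isPWO_support
        f.isPWO_support (2 * j)).erase (j, j), f.coeff p.1 * f.coeff p.2) := by
      refine isNilpotent_sum fun p hp => ?_
      rw [Finset.mem_erase, Finset.mem_antidiagonal] at hp
      obtain ⟨hne, h1, h2, h3⟩ := hp
      rcases lt_or_ge p.1 j with h | h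
      · exact Commute.isNilpotent_mul_right (Commute.all _ _) (IH _ h)
      rcases lt_or_ge p.2 j with h' | h'
      · exact Commute.isNilpotent_mul_left (Commute.all _ _) (IH _ h')
      · exfalso
        apply hne
        have : p.1 = j := by omega
        have : p.2 = j := by omega
        exact Prod.ext (by omega) (by omega)
    have h2jnil : IsNilpotent (f.coeff (2 * j)) := by
      rcases lt_or_ge (2 * j) n' with h | h
      · rw [hlow _ h]; exact IsNilpotent.zero
      · exact IH _ (by omega)
    have : f.coeff j * f.coeff j = f.coeff (2 * j) - ∑ p ∈ (Finset.antidiagonal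
        f.isPWO_support f.isPWO_support (2 * j)).erase (j, j),
        f.coeff p.1 * f.coeff p.2 := by linear_combination h2j
    rw [this]
    exact Commute.isNilpotent_sub (Commute.all _ _) h2jnil hrest
  -- all negative coefficients are nilpotent
  have hneg : ∀ j : ℤ, j < 0 → IsNilpotent (f.coeff j) := by
    have key : ∀ d : ℕ, ∀ j : ℤ, j < 0 → j ≤ n' + d → IsNilpotent (f.coeff j) := by
      intro d
      induction d with
      | zero =>
        intro j hj hjd
        refine step j hj fun i hi => ?_
        rw [hlow i (by omega)]
        exact IsNilpotent.zero
      | succ d ih =>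
        intro j hj hjd
        refine step j hj fun i hi => ?_
        rcases lt_or_ge i n' with h | h
        · rw [hlow i h]; exact IsNilpotent.zero
        · exact ih i (by omega) (by push_cast at hjd ⊢; omega)
    intro j hj
    rcases lt_or_ge j n' with h | h
    · rw [hlow j h]; exact IsNilpotent.zero
    · exact key (j - n').toNat j hj (by omega)
  -- the constant coefficient is idempotent up to nilpotents
  have h0nil : IsNilpotent (f.coeff 0 * f.coeff 0 - f.coeff 0) := by
    by_cases hc0 : f.coeff 0 = 0
    · rw [hc0]; simpa using IsNilpotent.zero
    have h00 : (f * f).coeff 0 = f.coeff 0 := by rw [hf]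
    rw [HahnSeries.coeff_mul] at h00
    have hmem : ((0, 0) : ℤ × ℤ) ∈
        Finset.antidiagonal f.isPWO_support f.isPWO_support 0 := by
      rw [Finset.mem_antidiagonal]
      exact ⟨hc0, hc0, add_zero 0⟩
    rw [← Finset.add_sum_erase _ _ hmem] at h00
    have : f.coeff 0 * f.coeff 0 - f.coeff 0 = -∑ p ∈ (Finset.antidiagonal
        f.isPWO_support f.isPWO_support 0).erase (0, 0),
        f.coeff p.1 * f.coeff p.2 := by linear_combination h00
    rw [this]
    refine IsNilpotent.neg (isNilpotent_sum fun p hp => ?_)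
    rw [Finset.mem_erase, Finset.mem_antidiagonal] at hp
    obtain ⟨hne, h1, h2, h3⟩ := hp
    rcases lt_or_ge p.1 0 with h | h
    · exact Commute.isNilpotent_mul_right (Commute.all _ _) (hneg _ h)
    rcases lt_or_ge p.2 0 with h' | h'
    · exact Commute.isNilpotent_mul_left (Commute.all _ _) (hneg _ h')
    · exact absurd (Prod.ext (show p.1 = 0 by omega) (show p.2 = 0 by omega)) hne
  -- lift the constant coefficient to an honest idempotent of R
  set x : R := f.coeff 0 with hxdef
  obtain ⟨m, hm⟩ := h0nil
  have hm1 : (x * x - x) ^ (m + 1) = 0 := by rw [pow_succ, hm, zero_mul]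
  set N : ℕ := 2 * m + 2 with hNdef
  have hxx : (x - x ^ 2) ^ N = 0 := by
    have e1 : (x - x ^ 2) ^ N = ((x - x ^ 2) ^ 2) ^ (m + 1) := by
      rw [← pow_mul, hNdef]; ring_nf
    have e2 : (x - x ^ 2) ^ 2 = (x * x - x) ^ 2 := by ring
    rw [e1, e2, ← pow_mul, show 2 * (m + 1) = (m + 1) * 2 by ring, pow_mul, hm1,
      zero_pow (by omega)]
  set e : R := 1 - (1 - x ^ N) ^ N with hedef
  have he : IsIdempotentElem e := isIdempotentElem_one_sub_one_sub_pow_pow x N hxx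
  have he2 : IsNilpotent (e - x) := by
    have hmem : e - x ∈ Ideal.span {x * x - x} := by
      rw [← Ideal.Quotient.eq_zero_iff_mem, map_sub, sub_eq_zero]
      set π := Ideal.Quotient.mk (Ideal.span {x * x - x})
      have hπx : IsIdempotentElem (π x) := by
        have : π (x * x - x) = 0 :=
          Ideal.Quotient.eq_zero_iff_mem.mpr (Ideal.subset_span rfl)
        rw [map_sub, map_mul, sub_eq_zero] at this
        exact this
      have h1 : π (x ^ N) = π x := by
        rw [map_pow, hNdef, show 2 * m + 2 = (2 * m + 1) + 1 from rfl, hπx.pow_succ_eq]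
      have h2 : (1 - π x) ^ N = 1 - π x := by
        rw [hNdef, show 2 * m + 2 = (2 * m + 1) + 1 from rfl, hπx.one_sub.pow_succ_eq]
      rw [hedef]
      rw [map_sub, map_one, map_pow, map_sub, map_one, h1, h2]
      ring
    obtain ⟨c0, hc0⟩ := Ideal.mem_span_singleton.mp hmem
    rw [hc0]
    exact Commute.isNilpotent_mul_right (Commute.all _ _) ⟨m, hm⟩
  -- split f - C e into a nilpotent low part and a high part
  set c : LaurentSeries R := HahnSeries.C e with hcdef
  have hcc : c * c = c := by rw [hcdef, ← map_mul, he.eq]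
  set h : LaurentSeries R := f - c with hhdef
  have h3 : h * h * h = h := by
    rw [hhdef]
    linear_combination (f + 1 - 3 * c) * hf + (3 * f - c - 1) * hcc
  have hpow : ∀ k : ℕ, h ^ (2 * k + 1) = h := by
    intro k
    induction k with
    | zero => norm_num
    | succ k ih =>
      have h2 : 2 * (k + 1) + 1 = (2 * k + 1) + 2 := by ring
      rw [h2, _root_.pow_add, ih, pow_two, ← mul_assoc, h3]
  have hCco : ∀ i : ℤ, i ≠ 0 → c.coeff i = 0 := by
    intro i hi
    rw [hcdef]
    exact HahnSeries.coeff_single_of_ne hi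
  have hhneg : ∀ i : ℤ, i ≤ 0 → IsNilpotent (h.coeff i) := by
    intro i hi
    rw [hhdef, HahnSeries.coeff_sub]
    rcases hi.lt_or_eq with hlt | rfl
    · rw [hCco i (by omega), sub_zero]
      exact hneg i hlt
    · have : c.coeff 0 = e := by rw [hcdef]; exact HahnSeries.coeff_single_same 0 e
      rw [this]
      have := he2.neg
      rwa [neg_sub] at this
  have hhlow : ∀ i : ℤ, i < n' → h.coeff i = 0 := by
    intro i hi
    rw [hhdef, HahnSeries.coeff_sub, hlow i hi, hCco i (by omega), sub_zero]
  set v : LaurentSeries R := ∑ i ∈ Finset.Icc n' 0, HahnSeries.single i (h.coeff i)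
    with hvdef
  have hvco : ∀ a : ℤ, v.coeff a = if a ∈ Finset.Icc n' 0 then h.coeff a else 0 := by
    intro a
    rw [hvdef, sum_coeff']
    by_cases ha : a ∈ Finset.Icc n' 0
    · rw [if_pos ha, Finset.sum_eq_single_of_mem a ha
        (fun b _ hb => HahnSeries.coeff_single_of_ne (Ne.symm hb)),
        HahnSeries.coeff_single_same]
    · rw [if_neg ha]
      refine Finset.sum_eq_zero fun b hb => ?_
      exact HahnSeries.coeff_single_of_ne fun hab => ha (by rw [hab]; exact hb)
  have hvnil : IsNilpotent v := by
    refine isNilpotent_sum fun i hi => ?_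
    obtain ⟨mi, hmi⟩ := hhneg i (Finset.mem_Icc.mp hi).2
    exact ⟨mi, by rw [HahnSeries.single_pow, hmi, HahnSeries.single_eq_zero]⟩
  have hvlow : ∀ i : ℤ, i < n' → v.coeff i = 0 := by
    intro i hi
    rw [hvco, if_neg]
    rw [Finset.mem_Icc]
    omega
  set w : LaurentSeries R := h - v with hwdef
  have hwlow : ∀ i : ℤ, i < 1 → w.coeff i = 0 := by
    intro i hi
    rw [hwdef, HahnSeries.coeff_sub, hvco]
    by_cases hmi : i ∈ Finset.Icc n' 0
    · rw [if_pos hmi, sub_self]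
    · rw [if_neg hmi, sub_zero]
      refine hhlow i ?_
      rw [Finset.mem_Icc] at hmi
      omega
  obtain ⟨M0, hM0⟩ := hvnil
  have hvM : v ^ (M0 + 1) = 0 := by rw [pow_succ, hM0, zero_mul]
  set M : ℕ := M0 + 1 with hMdef
  have hzero : h = 0 := by
    ext d
    show h.coeff d = 0
    set k : ℕ := (d - ((M : ℤ) - 1) * (n' - 1)).toNat with hkdef
    have hkge : (k : ℤ) ≥ d - ((M : ℤ) - 1) * (n' - 1) := Int.self_le_toNat _
    have hk2 : (2 * (k : ℤ) + 1) + ((M : ℤ) - 1) * (n' - 1) > d := by linarith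
    have hco := congrArg (fun z : LaurentSeries R => z.coeff d) (hpow k)
    rw [← hco]
    have hvw : v + w = h := by rw [hwdef]; ring
    rw [← hvw, add_pow, sum_coeff']
    refine Finset.sum_eq_zero fun j hj => ?_
    rw [Finset.mem_range] at hj
    rcases lt_or_ge j M with hjM | hjM
    · -- low-order bound kills the coefficient
      have hb1 : ∀ i : ℤ, i < (j : ℤ) * n' → (v ^ j).coeff i = 0 := lowzero_pow hvlow j
      have hb2 : ∀ i : ℤ, i < ((2 * k + 1 - j : ℕ) : ℤ) * 1 →
          (w ^ (2 * k + 1 - j)).coeff i = 0 := lowzero_pow hwlow (2 * k + 1 - j)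
      have hb3 : ∀ i : ℤ, i < 0 →
          ((((2 * k + 1).choose j : ℕ) : LaurentSeries R)).coeff i = 0 := by
        intro i hi
        rw [← map_natCast (HahnSeries.C : R →+* LaurentSeries R) ((2 * k + 1).choose j)]
        exact HahnSeries.coeff_single_of_ne (by omega)
      refine lowzero_mul (lowzero_mul hb1 hb2) hb3 d ?_
      have hcast : ((2 * k + 1 - j : ℕ) : ℤ) = 2 * (k : ℤ) + 1 - (j : ℤ) := by
        push_cast [Nat.cast_sub (by omega : j ≤ 2 * k + 1)]
        ring
      rw [hcast]
      have hmul : ((M : ℤ) - 1) * (n' - 1) ≤ (j : ℤ) * (n' - 1) := by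
        refine mul_le_mul_of_nonpos_right ?_ (by omega)
        have : (j : ℤ) ≤ (M : ℤ) - 1 := by
          have : j ≤ M0 := by omega
          push_cast [hMdef]
          omega
        linarith
      nlinarith [hk2, hmul]
    · -- the power of v vanishes
      have : v ^ j = 0 := by
        have h1 : j = M + (j - M) := by omega
        rw [h1, _root_.pow_add, hMdef, hvM, zero_mul]
      rw [this, zero_mul, zero_mul, HahnSeries.coeff_zero]
  refine ⟨e, he.eq, ?_⟩
  rw [hhdef, sub_eq_zero] at hzero
  exact hzero
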